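/- Consider the planar ODE system (PX): da/dt = a(a+1)(a+c−1)·φ₃, dc/dt = −c(1−c)(a+c+1)·φ₁, where φ₁ = −3a²+1+c²−2c−2ac−2a and φ₃ = −3c²+a²+1+2c−2ac+2a. In the closed region {(a,c) ∈ ℝ² : a ≥ 0, 0 ≤ c ≤ 1}, the right-hand side of (PX) vanishes exactly at the three points (0,0), (1,0), and (0,1). Moreover, the Jacobian matrix of the right-hand side at (0,0) is minus the identity matrix, at (1,0) it is the matrix with rows (8, 8) and (0, 8), and at (0,1) it is the zero matrix. -/

import Mathlib

open Real Filter Set Topology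

/-- `φ₁ = -3a² + 1 + c² - 2c - 2ac - 2a`. -/
noncomputable def phi1 (a c : ℝ) : ℝ :=
  -3 * a ^ 2 + 1 + c ^ 2 - 2 * c - 2 * a * c - 2 * a

/-- `φ₃ = -3c² + a² + 1 + 2c - 2ac + 2a`. -/
noncomputable def phi3 (a c : ℝ) : ℝ :=
  -3 * c ^ 2 + a ^ 2 + 1 + 2 * c - 2 * a * c + 2 * a

/-- The right-hand side of the planar ODE system (PX):
`da/dt = a(a+1)(a+c-1)φ₃`, `dc/dt = -c(1-c)(a+c+1)φ₁`. -/
noncomputable def PX (p : ℝ × ℝ) : ℝ × ℝ :=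
  (p.1 * (p.1 + 1) * (p.1 + p.2 - 1) * phi3 p.1 p.2,
    -(p.2 * (1 - p.2) * (p.1 + p.2 + 1)) * phi1 p.1 p.2)

lemma PX_fderiv (p v : ℝ × ℝ) :
    fderiv ℝ PX p v =
      (((p.1 + 1) * (p.1 + p.2 - 1) * phi3 p.1 p.2
          + p.1 * (p.1 + p.2 - 1) * phi3 p.1 p.2
          + p.1 * (p.1 + 1) * phi3 p.1 p.2
          + p.1 * (p.1 + 1) * (p.1 + p.2 - 1) * (2 * p.1 - 2 * p.2 + 2)) * v.1
        + (p.1 * (p.1 + 1) * phi3 p.1 p.2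
          + p.1 * (p.1 + 1) * (p.1 + p.2 - 1) * (-6 * p.2 + 2 - 2 * p.1)) * v.2,
       (-(p.2 * (1 - p.2)) * phi1 p.1 p.2
          - p.2 * (1 - p.2) * (p.1 + p.2 + 1) * (-6 * p.1 - 2 * p.2 - 2)) * v.1
        + ((-((1 - p.2) * (p.1 + p.2 + 1)) + p.2 * (p.1 + p.2 + 1) - p.2 * (1 - p.2)) * phi1 p.1 p.2
          - p.2 * (1 - p.2) * (p.1 + p.2 + 1) * (2 * p.2 - 2 - 2 * p.1)) * v.2) := by
  have h1 : HasFDerivAt (fun q : ℝ × ℝ => q.1) (ContinuousLinearMap.fst ℝ ℝ ℝ) p :=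
    hasFDerivAt_fst
  have h2 : HasFDerivAt (fun q : ℝ × ℝ => q.2) (ContinuousLinearMap.snd ℝ ℝ ℝ) p :=
    hasFDerivAt_snd
  have hphi3 := ((((((h2.mul h2).const_mul (-3)).add (h1.mul h1)).add_const 1).add
      (h2.const_mul 2)).sub ((h1.const_mul 2).mul h2)).add (h1.const_mul 2)
  have hphi1 := ((((((h1.mul h1).const_mul (-3)).add_const 1).add (h2.mul h2)).sub
      (h2.const_mul 2)).sub ((h1.const_mul 2).mul h2)).sub (h1.const_mul 2)
  have hf1 := ((h1.mul (h1.add_const 1)).mul ((h1.add h2).sub_const 1)).mul hphi3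
  have hf2 := (((h2.mul (h2.const_sub 1)).mul ((h1.add h2).add_const 1)).neg).mul hphi1
  have H0 := hf1.prodMk hf2
  have H : HasFDerivAt PX _ p := H0.congr_of_eventuallyEq
    (Filter.Eventually.of_forall fun q => by
      simp only [PX, phi1, phi3, Prod.mk.injEq, Pi.mul_apply, Pi.add_apply, Pi.sub_apply,
        Pi.neg_apply, Pi.pow_apply]
      constructor <;> ring)
  rw [H.fderiv]
  simp [phi1, phi3, ContinuousLinearMap.prod_apply, ContinuousLinearMap.add_apply,
    ContinuousLinearMap.smul_apply, ContinuousLinearMap.sub_apply,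
    ContinuousLinearMap.neg_apply, ContinuousLinearMap.coe_fst',
    ContinuousLinearMap.coe_snd', smul_eq_mul]
  constructor <;> ring

/-- In the closed region `{a ≥ 0, 0 ≤ c ≤ 1}`, the equilibria of the planar system (PX) are
exactly `(0,0)`, `(1,0)` and `(0,1)`; the Jacobian of the right-hand side is minus the
identity at `(0,0)`, has rows `(8,8)` and `(0,8)` at `(1,0)`, and vanishes at `(0,1)`. -/
theorem xcf_planar_equilibria :
    (∀ p : ℝ × ℝ, 0 ≤ p.1 → 0 ≤ p.2 → p.2 ≤ 1 →
      (PX p = 0 ↔ p = (0, 0) ∨ p = (1, 0) ∨ p = (0, 1))) ∧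
    (∀ v : ℝ × ℝ, fderiv ℝ PX (0, 0) v = (-v.1, -v.2)) ∧
    (∀ v : ℝ × ℝ, fderiv ℝ PX (1, 0) v = (8 * v.1 + 8 * v.2, 8 * v.2)) ∧
    fderiv ℝ PX (0, 1) = 0 := by
  refine ⟨?_, ?_, ?_, ?_⟩
  · intro p ha hc hc1
    constructor
    · intro h
      have h1 : p.1 * (p.1 + 1) * (p.1 + p.2 - 1) * phi3 p.1 p.2 = 0 := congrArg Prod.fst h
      have h2 : -(p.2 * (1 - p.2) * (p.1 + p.2 + 1)) * phi1 p.1 p.2 = 0 := congrArg Prod.snd h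
      suffices hs : (p.1 = 0 ∧ p.2 = 0) ∨ (p.1 = 1 ∧ p.2 = 0) ∨ (p.1 = 0 ∧ p.2 = 1) by
        rcases hs with ⟨u, w⟩ | ⟨u, w⟩ | ⟨u, w⟩
        · exact Or.inl (Prod.ext u w)
        · exact Or.inr (Or.inl (Prod.ext u w))
        · exact Or.inr (Or.inr (Prod.ext u w))
      -- second equation cases
      have h2' : p.2 = 0 ∨ p.2 = 1 ∨ phi1 p.1 p.2 = 0 := by
        rcases mul_eq_zero.mp h2 with hL | hR
        · have hL' : p.2 * (1 - p.2) * (p.1 + p.2 + 1) = 0 := by linarith [neg_eq_zero.mp hL]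
          rcases mul_eq_zero.mp hL' with hLL | hLR
          · rcases mul_eq_zero.mp hLL with h0 | h0
            · exact Or.inl h0
            · exact Or.inr (Or.inl (by linarith))
          · exfalso; linarith
        · exact Or.inr (Or.inr hR)
      rcases mul_eq_zero.mp h1 with hL | hphi3
      · rcases mul_eq_zero.mp hL with hLL | hac
        · rcases mul_eq_zero.mp hLL with ha0 | habs
          · -- a = 0
            rcases h2' with h0 | h0 | hphi1
            · exact Or.inl ⟨ha0, h0⟩
            · exact Or.inr (Or.inr ⟨ha0, h0⟩)
            · refine Or.inr (Or.inr ⟨ha0, ?_⟩)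
              simp only [phi1] at hphi1
              nlinarith [sq_nonneg (1 - p.2)]
          · exfalso; linarith
        · -- a + c - 1 = 0
          rcases h2' with h0 | h0 | hphi1
          · exact Or.inr (Or.inl ⟨by linarith, h0⟩)
          · exact Or.inr (Or.inr ⟨by linarith, h0⟩)
          · have hc' : p.2 = 1 := by
              simp only [phi1] at hphi1
              linear_combination hphi1 / 4 - (-3 * p.1 + p.2 - 5) / 4 * hac
            exact Or.inr (Or.inr ⟨by linarith, hc'⟩)
      · -- phi3 = 0
        rcases h2' with h0 | h0 | hphi1
        · exfalso; simp only [phi3] at hphi3; nlinarith [sq_nonneg (p.1 + 1)]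
        · refine Or.inr (Or.inr ⟨?_, h0⟩)
          have haa : p.1 ^ 2 = 0 := by
            simp only [phi3] at hphi3
            linear_combination hphi3 - (3 * p.2 + 1 + 2 * p.1) * (by linarith : (1 : ℝ) - p.2 = 0)
          exact (pow_eq_zero_iff two_ne_zero).mp haa
        · have key : (p.1 + p.2) * (p.1 - p.2 + 1) = 0 := by
            simp only [phi1] at hphi1; simp only [phi3] at hphi3
            linear_combination (hphi3 - hphi1) / 4
          rcases mul_eq_zero.mp key with hk | hk
          · exact Or.inl ⟨by linarith, by linarith⟩
          · exact Or.inr (Or.inr ⟨by linarith, by linarith⟩)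
    · rintro (rfl | rfl | rfl) <;>
        · simp only [PX, phi1, phi3, Prod.mk.injEq]
          norm_num [Prod.ext_iff]
  · intro v
    rw [PX_fderiv]
    norm_num [phi1, phi3]
  · intro v
    rw [PX_fderiv]
    norm_num [phi1, phi3]
  · refine ContinuousLinearMap.ext fun v => ?_
    rw [PX_fderiv]
    norm_num [phi1, phi3, Prod.ext_iff]
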